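/- Fix n ≥ 1, positive reals aⱼ, bⱼ, ξⱼ for j ∈ {1,…,n}, and P > 0. Define βⱼ = √(bⱼ ξⱼ / aⱼ) and assume β₁ ≤ β₂ ≤ ⋯ ≤ βₙ. For 1 ≤ i ≤ n define f(i) = βᵢ · (∑_{j=1}^i √(aⱼ bⱼ ξⱼ)) / (P + ∑_{j=1}^i bⱼ ξⱼ). Then: (a) f(1) < 1; (b) for every 1 ≤ i < n, if f(i) < 1 then f(i+1) ≥ f(i); and (c) for every 1 ≤ i < n, if f(i) ≥ 1 then f(i+1) ≥ 1. -/

import Mathlib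

open Finset

lemma sqrt_key (A B X : ℝ) (hA : 0 < A) (hB : 0 < B) (hX : 0 < X) :
    Real.sqrt (B * X / A) * Real.sqrt (A * B * X) = B * X := by
  rw [← Real.sqrt_mul (by positivity)]
  have h : B * X / A * (A * B * X) = (B * X) ^ 2 := by field_simp
  rw [h, Real.sqrt_sq (by positivity)]

lemma step_key (S T P bk bk' s t : ℝ) (hP : 0 < P) (hS : 0 ≤ S) (hT : 0 ≤ T)
    (hs : 0 ≤ s) (ht : 0 < t) (hbb : bk ≤ bk') (hbk : 0 < bk)
    (hts : bk' * s = t) :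
    (bk * S / (P + T) < 1 → bk * S / (P + T) ≤ bk' * (S + s) / (P + T + t)) ∧
    (1 ≤ bk * S / (P + T) → 1 ≤ bk' * (S + s) / (P + T + t)) := by
  have hD : 0 < P + T := by linarith
  have hD' : 0 < P + T + t := by linarith
  constructor
  · intro h
    rw [div_lt_one hD] at h
    rw [div_le_div_iff₀ hD hD']
    have h1 : bk * S ≤ bk' * S := by nlinarith
    nlinarith [mul_le_mul_of_nonneg_right h1 hD.le, mul_lt_mul_of_pos_right h ht]
  · intro h
    rw [one_le_div hD] at h
    rw [one_le_div hD']
    have h1 : bk * S ≤ bk' * S := by nlinarith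
    nlinarith

/-- Appendix D: with `βⱼ = √(bⱼξⱼ/aⱼ)` sorted increasingly and
`f(i) = βᵢ·(∑_{j≤i} √(aⱼbⱼξⱼ))/(P + ∑_{j≤i} bⱼξⱼ)`, one has (a) `f(1) < 1`;
(b) `f` is nondecreasing while below `1`; (c) the property `f(i) ≥ 1` is
absorbing. -/
theorem stmt_6 (n : ℕ) (hn : 1 ≤ n) (a b ξ : Fin n → ℝ) (P : ℝ) (hP : 0 < P)
    (ha : ∀ i, 0 < a i) (hb : ∀ i, 0 < b i) (hξ : ∀ i, 0 < ξ i)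
    (β : Fin n → ℝ) (hβ : ∀ i, β i = Real.sqrt (b i * ξ i / a i))
    (hsort : Monotone β)
    (f : Fin n → ℝ)
    (hf : ∀ i, f i = β i * (∑ j ∈ Finset.Iic i, Real.sqrt (a j * b j * ξ j)) /
      (P + ∑ j ∈ Finset.Iic i, b j * ξ j)) :
    f ⟨0, hn⟩ < 1 ∧
    (∀ i : ℕ, ∀ hi : i + 1 < n,
      f ⟨i, by omega⟩ < 1 → f ⟨i, by omega⟩ ≤ f ⟨i + 1, hi⟩) ∧
    (∀ i : ℕ, ∀ hi : i + 1 < n,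
      1 ≤ f ⟨i, by omega⟩ → 1 ≤ f ⟨i + 1, hi⟩) := by
  have hβpos : ∀ i, 0 < β i := fun i => by
    have h1 := ha i; have h2 := hb i; have h3 := hξ i
    rw [hβ i]; positivity
  have hkey : ∀ i : Fin n, β i * Real.sqrt (a i * b i * ξ i) = b i * ξ i := by
    intro i
    rw [hβ i]; exact sqrt_key _ _ _ (ha i) (hb i) (hξ i)
  have main : ∀ i : ℕ, ∀ hi : i + 1 < n,
      (f ⟨i, by omega⟩ < 1 → f ⟨i, by omega⟩ ≤ f ⟨i + 1, hi⟩) ∧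
      (1 ≤ f ⟨i, by omega⟩ → 1 ≤ f ⟨i + 1, hi⟩) := by
    intro i hi
    set k : Fin n := ⟨i, by omega⟩
    set k' : Fin n := ⟨i + 1, hi⟩
    have hI : Finset.Iic k' = insert k' (Finset.Iic k) := by
      ext j; simp [Fin.le_def, Fin.ext_iff, k, k']; omega
    have hnm : k' ∉ Finset.Iic k := by simp [Fin.le_def, k, k']
    set S := ∑ j ∈ Finset.Iic k, Real.sqrt (a j * b j * ξ j) with hSdef
    set T := ∑ j ∈ Finset.Iic k, b j * ξ j with hTdef
    set s := Real.sqrt (a k' * b k' * ξ k') with hsdef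
    set t := b k' * ξ k' with htdef
    have hfk : f k = β k * S / (P + T) := hf k
    have hfk' : f k' = β k' * (S + s) / (P + T + t) := by
      rw [hf k', hI, Finset.sum_insert hnm, Finset.sum_insert hnm]
      rw [hSdef, hTdef, hsdef, htdef]
      ring_nf
    have hS : 0 ≤ S := Finset.sum_nonneg fun j _ => Real.sqrt_nonneg _
    have hT : 0 ≤ T := Finset.sum_nonneg fun j _ => by
      have := hb j; have := hξ j; positivity
    have hs : 0 ≤ s := Real.sqrt_nonneg _
    have ht : 0 < t := by have := hb k'; have := hξ k'; positivity
    have hbb : β k ≤ β k' := hsort (by simp [Fin.le_def, k, k'])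
    have := step_key S T P (β k) (β k') s t hP hS hT hs ht hbb (hβpos k) (hkey k')
    rw [hfk, hfk']
    exact this
  refine ⟨?_, fun i hi => (main i hi).1, fun i hi => (main i hi).2⟩
  have hI : Finset.Iic (⟨0, hn⟩ : Fin n) = {⟨0, hn⟩} := by
    ext j; simp [Fin.le_def, Fin.ext_iff]
  rw [hf, hI]
  simp only [Finset.sum_singleton]
  rw [hkey ⟨0, hn⟩]
  have hbt : 0 < b ⟨0, hn⟩ * ξ ⟨0, hn⟩ := by
    have := hb ⟨0, hn⟩; have := hξ ⟨0, hn⟩; positivity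
  rw [div_lt_one (by linarith)]
  linarith
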